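/- (Schönheim bound) Any (v,k,λ)-covering has at least ⌈v·r/k⌉ blocks, where r = ⌈λ(v−1)/(k−1)⌉. -/
import Mathlib

open Finset

private lemma countP_sum_aux {α β : Type*} (W : Finset β) (p : β → α → Prop)
    [∀ w b, Decidable (p w b)] (s : Multiset α) :
    ∑ w ∈ W, s.countP (fun b => p w b) =
      (s.map (fun b => (W.filter (fun w => p w b)).card)).sum := by
  induction s using Multiset.induction_on with
  | empty => simp
  | cons a s ih =>
    simp only [Multiset.countP_cons, Multiset.map_cons, Multiset.sum_cons,
      Finset.sum_add_distrib, ih, Finset.card_filter]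
    omega

private lemma countP_eq_sum_map {α : Type*} (p : α → Prop) [DecidablePred p] (s : Multiset α) :
    s.countP p = (s.map (fun b => if p b then 1 else 0)).sum := by
  induction s using Multiset.induction_on with
  | empty => simp
  | cons a s ih =>
    simp only [Multiset.countP_cons, Multiset.map_cons, Multiset.sum_cons, ih]
    omega

theorem stmt_6 (v k l : ℕ) (hl : 0 < l) (hk : 2 ≤ k) (hkv : k ≤ v)
    (𝓑 : Multiset (Finset (Fin v)))
    (hblocks : ∀ b ∈ 𝓑, b.card = k)
    (hcov : ∀ u w : Fin v, u ≠ w → l ≤ 𝓑.countP (fun b => u ∈ b ∧ w ∈ b))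
    (r : ℤ) (hr : r = ⌈(l * (v - 1) : ℚ) / (k - 1)⌉) :
    (⌈(v * r : ℚ) / k⌉ : ℤ) ≤ (Multiset.card 𝓑 : ℤ) := by
  have hv1 : 1 ≤ v := le_trans (by omega) hkv
  have hk1 : 1 ≤ k := by omega
  set R : Fin v → ℕ := fun x => 𝓑.countP (fun b => x ∈ b) with hR
  -- Step A : l * (v-1) ≤ (k-1) * R x
  have stepA : ∀ x : Fin v, l * (v - 1) ≤ (k - 1) * R x := by
    intro x
    have h1 : l * (v - 1) ≤ ∑ w ∈ univ.erase x, 𝓑.countP (fun b => x ∈ b ∧ w ∈ b) := by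
      have hcard : (univ.erase x).card = v - 1 := by
        rw [Finset.card_erase_of_mem (mem_univ x)]
        simp
      calc l * (v - 1) = ∑ _w ∈ univ.erase x, l := by rw [Finset.sum_const, hcard]; ring
        _ ≤ _ := Finset.sum_le_sum fun w hw =>
            hcov x w (Ne.symm (Finset.ne_of_mem_erase hw))
    have h2 : ∑ w ∈ univ.erase x, 𝓑.countP (fun b => x ∈ b ∧ w ∈ b) ≤ (k - 1) * R x := by
      rw [countP_sum_aux (univ.erase x) (fun w b => x ∈ b ∧ w ∈ b) 𝓑]
      have hle : (𝓑.map (fun b => ((univ.erase x).filter (fun w => x ∈ b ∧ w ∈ b)).card)).sum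
          ≤ (𝓑.map (fun b => (k - 1) * (if x ∈ b then 1 else 0))).sum := by
        apply Multiset.sum_map_le_sum_map
        intro b hb
        by_cases hxb : x ∈ b
        · rw [if_pos hxb, mul_one]
          have hsub : (univ.erase x).filter (fun w => x ∈ b ∧ w ∈ b) ⊆ b.erase x := by
            intro w hw
            simp only [Finset.mem_filter, Finset.mem_erase, Finset.mem_univ, true_and] at hw ⊢
            exact ⟨hw.1.1, hw.2.2⟩
          calc _ ≤ (b.erase x).card := Finset.card_le_card hsub
            _ = k - 1 := by rw [Finset.card_erase_of_mem hxb, hblocks b hb]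
        · simp only [hxb, if_false, mul_zero]
          have : (univ.erase x).filter (fun w => x ∈ b ∧ w ∈ b) = ∅ := by
            apply Finset.filter_false_of_mem
            intro w _ h
            exact hxb h.1
          simp [this]
      refine hle.trans (le_of_eq ?_)
      have hRx : R x = (𝓑.map (fun b => if x ∈ b then 1 else 0)).sum :=
        countP_eq_sum_map _ _
      rw [hRx, ← Multiset.sum_map_mul_left]
    exact h1.trans h2
  -- Step B : ∑ x, R x = k * card 𝓑
  have stepB : ∑ x : Fin v, R x = k * Multiset.card 𝓑 := by
    rw [hR]
    rw [countP_sum_aux univ (fun w b => w ∈ b) 𝓑]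
    have : 𝓑.map (fun b => (univ.filter (fun w => w ∈ b)).card) = 𝓑.map (fun _ => k) := by
      apply Multiset.map_congr rfl
      intro b hb
      rw [Finset.filter_mem_eq_inter, Finset.univ_inter, hblocks b hb]
    rw [this, Multiset.map_const', Multiset.sum_replicate, smul_eq_mul, mul_comm]
  -- Step C : r ≤ R x
  have stepC : ∀ x : Fin v, r ≤ (R x : ℤ) := by
    intro x
    rw [hr, Int.ceil_le]
    have hkq : (0:ℚ) < (k:ℚ) - 1 := by
      have : (2:ℚ) ≤ (k:ℚ) := by exact_mod_cast hk
      linarith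
    rw [div_le_iff₀ hkq]
    have := stepA x
    have hcast : ((l * (v - 1) : ℕ) : ℚ) ≤ (((k - 1) * R x : ℕ) : ℚ) := by exact_mod_cast this
    push_cast [Nat.cast_sub hv1, Nat.cast_sub hk1] at hcast
    push_cast
    linarith
  -- Step D : v * r ≤ k * card 𝓑 in ℤ
  have stepD : (v : ℤ) * r ≤ (k : ℤ) * Multiset.card 𝓑 := by
    calc (v : ℤ) * r = ∑ _x : Fin v, r := by
          rw [Finset.sum_const, Finset.card_univ, Fintype.card_fin]; ring
      _ ≤ ∑ x : Fin v, (R x : ℤ) := Finset.sum_le_sum fun x _ => stepC x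
      _ = ((∑ x : Fin v, R x : ℕ) : ℤ) := by push_cast; ring
      _ = (k : ℤ) * Multiset.card 𝓑 := by rw [stepB]; push_cast; ring
  -- conclude
  rw [Int.ceil_le]
  have hkq : (0:ℚ) < (k:ℚ) := by exact_mod_cast lt_of_lt_of_le (by norm_num) hk
  rw [div_le_iff₀ hkq]
  have : ((v : ℤ) * r : ℤ) ≤ ((k : ℤ) * Multiset.card 𝓑 : ℤ) := stepD
  have hq : (((v:ℤ) * r : ℤ) : ℚ) ≤ (((k:ℤ) * Multiset.card 𝓑 : ℤ) : ℚ) := by exact_mod_cast this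
  push_cast at hq ⊢
  linarith
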